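/- In $\mathfrak{so}(1,3)$ with the basis $e_a = \varepsilon E_{a4}$, $e_{ab}=E_{ab}$ as above, the subspace $\mathfrak{p} = \mathrm{span}\{e_1,\; e_2 + \varepsilon e_{12},\; e_3 + \varepsilon e_{13},\; e_{23}\}$ is a Lie subalgebra, and for the linear functional $\lambda = \lambda(j)$ with coordinates $(p_1,p_2,p_3,l_{12},l_{13},l_{23}) = (j_1, 0,0,0,0, j_2)$ one has $\langle\lambda, [\mathfrak{p},\mathfrak{p}]\rangle = 0$, i.e. $\lambda$ vanishes on all brackets of elements of $\mathfrak{p}$; moreover $\dim\mathfrak{p} = 4 = \dim\mathfrak{so}(1,3) - \tfrac12\cdot 4$ (so $\mathfrak{p}$ is a real polarization of $\lambda$ for the 4-dimensional coadjoint orbits). -/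
import Mathlib

lemma aux_bracket_span {L : Type*} [LieRing L] [LieAlgebra ℝ L] (S : Set L)
    (h : ∀ a ∈ S, ∀ b ∈ S, ⁅a, b⁆ ∈ Submodule.span ℝ S) :
    ∀ x ∈ Submodule.span ℝ S, ∀ y ∈ Submodule.span ℝ S,
      ⁅x, y⁆ ∈ Submodule.span ℝ S := by
  intro x hx
  induction hx using Submodule.span_induction with
  | mem a ha =>
    intro y hy
    induction hy using Submodule.span_induction with
    | mem b hb => exact h a ha b hb
    | zero => simp
    | add y z _ _ ihy ihz => rw [lie_add]; exact Submodule.add_mem _ ihy ihz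
    | smul r y _ ih => rw [lie_smul]; exact Submodule.smul_mem _ _ ih
  | zero => intro y hy; simp
  | add x z _ _ ihx ihz =>
    intro y hy; rw [add_lie]; exact Submodule.add_mem _ (ihx y hy) (ihz y hy)
  | smul r x _ ih =>
    intro y hy; rw [smul_lie]; exact Submodule.smul_mem _ _ (ih y hy)

lemma aux_bracket_lam {L : Type*} [LieRing L] [LieAlgebra ℝ L] (S : Set L)
    (lam : L →ₗ[ℝ] ℝ)
    (h : ∀ a ∈ S, ∀ b ∈ S, lam ⁅a, b⁆ = 0) :
    ∀ x ∈ Submodule.span ℝ S, ∀ y ∈ Submodule.span ℝ S, lam ⁅x, y⁆ = 0 := by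
  intro x hx
  induction hx using Submodule.span_induction with
  | mem a ha =>
    intro y hy
    induction hy using Submodule.span_induction with
    | mem b hb => exact h a ha b hb
    | zero => simp
    | add y z _ _ ihy ihz => rw [lie_add, map_add, ihy, ihz, add_zero]
    | smul r y _ ih => rw [lie_smul, map_smul, ih, smul_zero]
  | zero => intro y hy; simp
  | add x z _ _ ihx ihz =>
    intro y hy; rw [add_lie, map_add, ihx y hy, ihz y hy, add_zero]
  | smul r x _ ih =>
    intro y hy; rw [smul_lie, map_smul, ih y hy, smul_zero]



/-- in `𝔰𝔬(1,3)` with basis `u a = e_{a+1} = ε E_{(a+1)4}` and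
`w = (e₁₂, e₁₃, e₂₃)` (bracket relations as hypotheses), the subspace
`𝔭 = span{e₁, e₂ + ε e₁₂, e₃ + ε e₁₃, e₂₃}` is a Lie subalgebra; for the linear
functional `λ` with coordinates `(p₁,p₂,p₃,l₁₂,l₁₃,l₂₃) = (j₁,0,0,0,0,j₂)` one
has `⟨λ,[𝔭,𝔭]⟩ = 0`; and `dim 𝔭 = 4 = dim 𝔰𝔬(1,3) - ½·4`, so `𝔭` is a real
polarization of `λ`. -/
theorem so13_polarization {L : Type*} [LieRing L] [LieAlgebra ℝ L]
    (ε j1 j2 : ℝ) (hε : ε ≠ 0)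
    (u w : Fin 3 → L)
    (hLI : LinearIndependent ℝ (Sum.elim u w))
    (huu1 : ⁅u 0, u 1⁆ = ε ^ 2 • w 0)
    (huu2 : ⁅u 0, u 2⁆ = ε ^ 2 • w 1)
    (huu3 : ⁅u 1, u 2⁆ = ε ^ 2 • w 2)
    (hw1u1 : ⁅w 0, u 0⁆ = -u 1) (hw1u2 : ⁅w 0, u 1⁆ = -u 0) (hw1u3 : ⁅w 0, u 2⁆ = 0)
    (hw2u1 : ⁅w 1, u 0⁆ = -u 2) (hw2u2 : ⁅w 1, u 1⁆ = 0) (hw2u3 : ⁅w 1, u 2⁆ = -u 0)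
    (hw3u1 : ⁅w 2, u 0⁆ = 0) (hw3u2 : ⁅w 2, u 1⁆ = u 2) (hw3u3 : ⁅w 2, u 2⁆ = -u 1)
    (hww1 : ⁅w 0, w 1⁆ = -w 2) (hww2 : ⁅w 0, w 2⁆ = -w 1) (hww3 : ⁅w 1, w 2⁆ = w 0)
    (lam : L →ₗ[ℝ] ℝ)
    (hlam1 : lam (u 0) = j1) (hlam2 : lam (u 1) = 0) (hlam3 : lam (u 2) = 0)
    (hlam4 : lam (w 0) = 0) (hlam5 : lam (w 1) = 0) (hlam6 : lam (w 2) = j2) :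
    (∀ x ∈ Submodule.span ℝ ({u 0, u 1 + ε • w 0, u 2 + ε • w 1, w 2} : Set L),
     ∀ y ∈ Submodule.span ℝ ({u 0, u 1 + ε • w 0, u 2 + ε • w 1, w 2} : Set L),
      ⁅x, y⁆ ∈ Submodule.span ℝ ({u 0, u 1 + ε • w 0, u 2 + ε • w 1, w 2} : Set L)) ∧
    (∀ x ∈ Submodule.span ℝ ({u 0, u 1 + ε • w 0, u 2 + ε • w 1, w 2} : Set L),
     ∀ y ∈ Submodule.span ℝ ({u 0, u 1 + ε • w 0, u 2 + ε • w 1, w 2} : Set L),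
      lam ⁅x, y⁆ = 0) ∧
    Module.finrank ℝ
      (Submodule.span ℝ ({u 0, u 1 + ε • w 0, u 2 + ε • w 1, w 2} : Set L)) = 4 := by
  set g1 := u 0 with hg1
  set g2 := u 1 + ε • w 0 with hg2
  set g3 := u 2 + ε • w 1 with hg3
  set g4 := w 2 with hg4
  set S : Set L := {g1, g2, g3, g4} with hS
  -- reversed brackets
  have r1 : ⁅u 0, w 0⁆ = u 1 := by rw [← lie_skew, hw1u1, neg_neg]
  have r2 : ⁅u 0, w 1⁆ = u 2 := by rw [← lie_skew, hw2u1, neg_neg]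
  have r3 : ⁅u 0, w 2⁆ = 0 := by rw [← lie_skew, hw3u1, neg_zero]
  have r4 : ⁅u 1, w 1⁆ = 0 := by rw [← lie_skew, hw2u2, neg_zero]
  have r5 : ⁅u 1, w 2⁆ = -u 2 := by rw [← lie_skew, hw3u2]
  have r6 : ⁅u 2, w 2⁆ = u 1 := by rw [← lie_skew, hw3u3, neg_neg]
  -- brackets of the generators
  have b12 : ⁅g1, g2⁆ = ε • g2 := by
    rw [hg1, hg2, lie_add, lie_smul, huu1, r1]; module
  have b13 : ⁅g1, g3⁆ = ε • g3 := by
    rw [hg1, hg3, lie_add, lie_smul, huu2, r2]; module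
  have b14 : ⁅g1, g4⁆ = 0 := r3
  have b23 : ⁅g2, g3⁆ = 0 := by
    rw [hg2, hg3, add_lie, lie_add, lie_add, lie_smul, lie_smul, smul_lie,
      smul_lie, huu3, r4, hw1u3, hww1]
    module
  have b24 : ⁅g2, g4⁆ = -g3 := by
    rw [hg2, hg4, add_lie, smul_lie, r5, hww2, hg3]; module
  have b34 : ⁅g3, g4⁆ = g2 := by
    rw [hg3, hg4, add_lie, smul_lie, r6, hww3, hg2]
  -- membership of generators
  have m1 : g1 ∈ Submodule.span ℝ S := Submodule.subset_span (by simp [hS])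
  have m2 : g2 ∈ Submodule.span ℝ S := Submodule.subset_span (by simp [hS])
  have m3 : g3 ∈ Submodule.span ℝ S := Submodule.subset_span (by simp [hS])
  have m4 : g4 ∈ Submodule.span ℝ S := Submodule.subset_span (by simp [hS])
  have hgen : ∀ a ∈ S, ∀ b ∈ S, ⁅a, b⁆ ∈ Submodule.span ℝ S := by
    intro a ha b hb
    rcases ha with rfl | rfl | rfl | rfl <;> rcases hb with rfl | rfl | rfl | rfl <;>
      simp only [lie_self, ← lie_skew (g2) (g1), ← lie_skew (g3) (g1),
        ← lie_skew (g4) (g1), ← lie_skew (g3) (g2), ← lie_skew (g4) (g2),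
        ← lie_skew (g4) (g3), b12, b13, b14, b23, b24, b34, neg_neg, neg_zero] <;>
      first
        | exact Submodule.zero_mem _
        | exact Submodule.smul_mem _ _ m2
        | exact Submodule.smul_mem _ _ m3
        | exact Submodule.neg_mem _ (Submodule.smul_mem _ _ m2)
        | exact Submodule.neg_mem _ (Submodule.smul_mem _ _ m3)
        | exact Submodule.neg_mem _ m3
        | exact Submodule.neg_mem _ m2
        | exact m2
        | exact m3
  have hlamg2 : lam g2 = 0 := by rw [hg2, map_add, map_smul, hlam2, hlam4]; simp
  have hlamg3 : lam g3 = 0 := by rw [hg3, map_add, map_smul, hlam3, hlam5]; simp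
  have hlamgen : ∀ a ∈ S, ∀ b ∈ S, lam ⁅a, b⁆ = 0 := by
    intro a ha b hb
    rcases ha with rfl | rfl | rfl | rfl <;> rcases hb with rfl | rfl | rfl | rfl <;>
      simp only [lie_self, ← lie_skew (g2) (g1), ← lie_skew (g3) (g1),
        ← lie_skew (g4) (g1), ← lie_skew (g3) (g2), ← lie_skew (g4) (g2),
        ← lie_skew (g4) (g3), b12, b13, b14, b23, b24, b34, neg_neg, neg_zero,
        map_zero, map_neg, map_smul, hlamg2, hlamg3, smul_zero, neg_zero]
  refine ⟨aux_bracket_span S hgen, aux_bracket_lam S lam hlamgen, ?_⟩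
  -- dimension count
  have hli4 : LinearIndependent ℝ ![g1, g2, g3, g4] := by
    rw [Fintype.linearIndependent_iff]
    intro c hc
    have key := Fintype.linearIndependent_iff.mp hLI
      (Sum.elim ![c 0, c 1, c 2] ![ε * c 1, ε * c 2, c 3]) ?_
    · intro i
      fin_cases i
      · simpa using key (Sum.inl 0)
      · simpa using key (Sum.inl 1)
      · simpa using key (Sum.inl 2)
      · simpa using key (Sum.inr 2)
    · rw [Fin.sum_univ_four] at hc
      rw [Fintype.sum_sum_type]
      simp only [Sum.elim_inl, Sum.elim_inr, Fin.sum_univ_three,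
        Matrix.cons_val_zero, Matrix.cons_val_one, Matrix.head_cons,
        Matrix.cons_val_two, Matrix.tail_cons, Matrix.cons_val_three] at hc ⊢
      rw [hg1, hg2, hg3, hg4] at hc
      linear_combination (norm := module) hc
  have hrange : Set.range ![g1, g2, g3, g4] = S := by
    rw [hS]
    ext x
    constructor
    · rintro ⟨i, rfl⟩
      fin_cases i <;> simp [Set.mem_insert_iff]
    · intro hx
      simp only [Set.mem_insert_iff, Set.mem_singleton_iff] at hx
      rcases hx with rfl | rfl | rfl | rfl
      exacts [⟨0, rfl⟩, ⟨1, rfl⟩, ⟨2, rfl⟩, ⟨3, rfl⟩]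
  rw [← hrange, finrank_span_eq_card hli4]
  simp
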